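/- arXiv:1509.02849 — 3 statements merged into one kernel-verified Lean document; each statement's English description precedes it below -/
import Mathlib

section
/- Fix an integer d ≥ 3. For m ≥ 1 and 1 ≤ h ≤ m define p(m,h) = (d−2)·(d−1)^{h−1} / ((d−1)^m − 1) and α(m,h) = ((d−1)^{m−h+1} − 1) / ((d−1)^{m+1} − 1). Then for every integer m ≥ 1: (i) α(m,1)·p(m,1) = p(m+1,1); (ii) for every h with 2 ≤ h ≤ m, α(m,h)·p(m,h) + (1 − α(m,h−1))·p(m,h−1) = p(m+1,h); and (iii) (1 − α(m,m))·p(m,m) = p(m+1,m+1). -/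
/-- Theorem 1(b), regular tree case `d ≥ 3`: the choice
`α(m,h) = ((d−1)^{m−h+1} − 1)/((d−1)^{m+1} − 1)` preserves the distribution
`p(m,h) = (d−2)(d−1)^{h−1}/((d−1)^m − 1)` of the hop distance of the virtual
source under the Markov transition from time `2m` to time `2m+2`. -/
theorem stmt_1 (d : ℕ) (hd : 3 ≤ d)
    (p : ℕ → ℕ → ℝ) (α : ℕ → ℕ → ℝ)
    (hp : ∀ m h, p m h = ((d : ℝ) - 2) * ((d : ℝ) - 1) ^ (h - 1)
        / (((d : ℝ) - 1) ^ m - 1))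
    (hα : ∀ m h, α m h = (((d : ℝ) - 1) ^ (m - h + 1) - 1)
        / (((d : ℝ) - 1) ^ (m + 1) - 1)) :
    ∀ m : ℕ, 1 ≤ m →
      (α m 1 * p m 1 = p (m + 1) 1) ∧
      (∀ h : ℕ, 2 ≤ h → h ≤ m →
        α m h * p m h + (1 - α m (h - 1)) * p m (h - 1) = p (m + 1) h) ∧
      ((1 - α m m) * p m m = p (m + 1) (m + 1)) := by
  intro m hm
  have hdr : (3 : ℝ) ≤ (d : ℝ) := by exact_mod_cast hd
  have hx : (2 : ℝ) ≤ (d : ℝ) - 1 := by linarith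
  have hne : ∀ n : ℕ, 1 ≤ n → ((d : ℝ) - 1) ^ n - 1 ≠ 0 := by
    intro n hn
    have h1 : (1 : ℝ) < ((d : ℝ) - 1) ^ n :=
      one_lt_pow₀ (by linarith) (by omega)
    intro hc; nlinarith
  refine ⟨?_, ?_, ?_⟩
  · obtain ⟨n, rfl⟩ : ∃ n, m = n + 1 := ⟨m - 1, by omega⟩
    rw [hp, hp, hα]
    have e1 : n + 1 - 1 + 1 = n + 1 := by omega
    have e2 : (1 : ℕ) - 1 = 0 := rfl
    rw [e1, e2]
    have h1 := hne (n + 1) (by omega)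
    have h2 := hne (n + 1 + 1) (by omega)
    field_simp
  · intro h h2 hhm
    obtain ⟨k, rfl⟩ : ∃ k, h = k + 2 := ⟨h - 2, by omega⟩
    obtain ⟨j, rfl⟩ : ∃ j, m = k + j + 2 := ⟨m - (k + 2), by omega⟩
    rw [hp, hp, hp, hα, hα]
    have e1 : k + j + 2 - (k + 2) + 1 = j + 1 := by omega
    have e2 : k + 2 - 1 = k + 1 := by omega
    have e3 : k + j + 2 - (k + 1) + 1 = j + 2 := by omega
    have e4 : k + 1 - 1 = k := by omega
    rw [e1, e2, e3, e4]
    have h1 := hne (k + j + 2) (by omega)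
    have h2 := hne (k + j + 2 + 1) (by omega)
    field_simp
    ring
  · obtain ⟨n, rfl⟩ : ∃ n, m = n + 1 := ⟨m - 1, by omega⟩
    rw [hp, hp, hα]
    have e1 : n + 1 - (n + 1) + 1 = 1 := by omega
    have e2 : n + 1 - 1 = n := by omega
    have e3 : n + 1 + 1 - 1 = n + 1 := by omega
    rw [e1, e2, e3]
    have h1 := hne (n + 1) (by omega)
    have h2 := hne (n + 1 + 1) (by omega)
    field_simp
    ring
end

section
/- Let G be a finite tree (a connected acyclic simple graph) with at least two vertices, and let r be a vertex of G. Then the sum, over all vertices v ≠ r having degree 1, of 1 / (deg(r) · ∏_w (deg(w) − 1)) — where the product ranges over the vertices w of the unique path from r to v other than r and v themselves — equals 1. -/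
/-- Step 3 of the proof of Theorem 2: in a finite tree with at least two
vertices, rooted at `r`, the quantities
`1/(deg(r)·∏_{w ∈ path(r,v) ∖ {r,v}} (deg(w) − 1))` sum to `1` over the
leaves `v ≠ r` (here `P v` is the unique path from `r` to `v`). -/
theorem stmt_8 {V : Type*} [Fintype V] [DecidableEq V]
    (G : SimpleGraph V) [DecidableRel G.Adj]
    (hG : G.IsTree) (h2 : 2 ≤ Fintype.card V) (r : V)
    (P : ∀ v : V, G.Walk r v) (hP : ∀ v, (P v).IsPath) :
    ∑ v ∈ Finset.univ.filter (fun v : V => v ≠ r ∧ G.degree v = 1),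
      (1 : ℝ) / ((G.degree r : ℝ) *
        ∏ w ∈ (P v).support.toFinset \ {r, v}, ((G.degree w : ℝ) - 1)) = 1 := by
  classical
  have hac : G.IsAcyclic := hG.IsAcyclic
  have huniq : ∀ {a b : V} (p q : G.Walk a b), p.IsPath → q.IsPath → p = q := by
    intro a b p q hp hq
    exact congrArg Subtype.val (hac.path_unique ⟨p, hp⟩ ⟨q, hq⟩)
  have hPr : P r = SimpleGraph.Walk.nil := huniq (P r) .nil (hP r) (by simp)
  -- every vertex `v ≠ r` arises as a concat through its parent
  have hdec : ∀ v, v ≠ r → ∃ (u : V) (h : G.Adj u v), P v = (P u).concat h := by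
    intro v hv
    have hn : ¬ (P v).Nil := SimpleGraph.Walk.not_nil_of_ne (Ne.symm hv)
    obtain ⟨x, h, q, hq⟩ := SimpleGraph.Walk.not_nil_iff.mp hn
    obtain ⟨y, q', h', he⟩ := SimpleGraph.Walk.exists_cons_eq_concat h q
    have hq' : q'.IsPath := by
      have hh := hP v
      rw [hq, he, SimpleGraph.Walk.concat_eq_append] at hh
      exact hh.of_append_left
    refine ⟨y, h', ?_⟩
    rw [hq, he, huniq (P y) q' (hP y) hq']
  choose! par hadj hcat using hdec
  -- the parent is unique
  have hparu : ∀ v (hv : v ≠ r) (u : V) (h : G.Adj u v),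
      P v = (P u).concat h → par v = u := by
    intro v hv u h he
    have h1 := hcat v hv
    rw [he] at h1
    have h2 := congrArg SimpleGraph.Walk.support h1
    rw [SimpleGraph.Walk.support_concat, SimpleGraph.Walk.support_concat] at h2
    have h3 : (P u).support = (P (par v)).support := by
      exact List.append_inj_left' h2 rfl
    have e1 : (P u).support.getLast? = some u := by
      rw [List.getLast?_eq_getLast (by simp), SimpleGraph.Walk.getLast_support]
    have e2 : (P (par v)).support.getLast? = some (par v) := by
      rw [List.getLast?_eq_getLast (by simp), SimpleGraph.Walk.getLast_support]
    rw [h3, e2] at e1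
    exact (Option.some.inj e1)
  -- orientation of each edge
  have hedge : ∀ u w, G.Adj u w → (u ≠ r ∧ w = par u) ∨ (w ≠ r ∧ par w = u) := by
    intro u w h
    by_cases hw : w ∈ (P u).support
    · left
      have hur : u ≠ r := by
        rintro rfl
        rw [hPr] at hw
        simp only [SimpleGraph.Walk.support_nil, List.mem_singleton] at hw
        exact G.loopless.irrefl _ (hw ▸ h)
      refine ⟨hur, ?_⟩
      have hsing : (P u).dropUntil w hw = SimpleGraph.Walk.cons h.symm .nil := by
        exact huniq _ _ ((hP u).dropUntil hw) (SimpleGraph.Path.singleton h.symm).2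
      have htw : (P u).takeUntil w hw = P w :=
        huniq _ _ ((hP u).takeUntil hw) (hP w)
      have hPu : P u = (P w).concat h.symm := by
        rw [SimpleGraph.Walk.concat_eq_append, ← htw, ← hsing, SimpleGraph.Walk.take_spec]
      exact (hparu u hur w h.symm hPu).symm
    · right
      have hwr : w ≠ r := fun e => hw (e ▸ (P u).start_mem_support)
      refine ⟨hwr, ?_⟩
      apply hparu w hwr u h
      apply huniq _ _ (hP w)
      rw [SimpleGraph.Walk.isPath_def, SimpleGraph.Walk.support_concat]
      simp [List.nodup_append, (hP u).support_nodup, hw]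
      exact fun a ha e => hw (e ▸ ha)
  -- a vertex is never the parent of its own parent
  have hnotboth : ∀ u, u ≠ r → ∀ v, v ≠ r → par v = u → par u ≠ v := by
    intro u hu v hv hpv hpu
    have l1 := congrArg SimpleGraph.Walk.length (hcat v hv)
    have l2 := congrArg SimpleGraph.Walk.length (hcat u hu)
    rw [SimpleGraph.Walk.length_concat] at l1 l2
    rw [hpv] at l1
    rw [hpu] at l2
    omega
  -- the children finsets
  set C : V → Finset V := fun u =>
    Finset.univ.filter (fun v => v ≠ r ∧ par v = u) with hCdef
  have hCr : C r = G.neighborFinset r := by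
    ext w
    simp only [hCdef, Finset.mem_filter, Finset.mem_univ, true_and,
      SimpleGraph.mem_neighborFinset]
    constructor
    · rintro ⟨hw, hp⟩
      have := hadj w hw
      rwa [hp] at this
    · intro h
      rcases hedge r w h with h' | h'
      · exact absurd rfl h'.1
      · exact ⟨h'.1, h'.2⟩
  have hCu : ∀ u, u ≠ r → C u = G.neighborFinset u \ {par u} := by
    intro u hu
    ext w
    simp only [hCdef, Finset.mem_filter, Finset.mem_univ, true_and,
      Finset.mem_sdiff, SimpleGraph.mem_neighborFinset, Finset.mem_singleton]
    constructor
    · rintro ⟨hw, hp⟩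
      refine ⟨by have := hadj w hw; rwa [hp] at this, ?_⟩
      intro he
      exact hnotboth u hu w hw hp he.symm
    · rintro ⟨ha, hne⟩
      rcases hedge u w ha with h' | h'
      · exact absurd h'.2 hne
      · exact ⟨h'.1, h'.2⟩
  have hcardCr : (C r).card = G.degree r := by
    rw [hCr]; rfl
  have hcardCu : ∀ u, u ≠ r → (C u).card = G.degree u - 1 := by
    intro u hu
    rw [hCu u hu, Finset.card_sdiff_of_subset (by
      simp only [Finset.singleton_subset_iff, SimpleGraph.mem_neighborFinset]
      exact (hadj u hu).symm)]
    rfl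
  -- degrees are positive
  have hdeg1 : ∀ u, u ≠ r → 1 ≤ G.degree u := by
    intro u hu
    have := hadj u hu
    have : 0 < G.degree u := (G.degree_pos_iff_exists_adj u).mpr ⟨par u, this.symm⟩
    omega
  have hdegr : 1 ≤ G.degree r := by
    obtain ⟨v, hv⟩ : ∃ v : V, v ≠ r := Fintype.exists_ne_of_one_lt_card (by omega) r
    have hn : ¬ (P v).Nil := SimpleGraph.Walk.not_nil_of_ne (Ne.symm hv)
    have : 0 < G.degree r := (G.degree_pos_iff_exists_adj r).mpr
      ⟨(P v).getVert 1, SimpleGraph.Walk.adj_snd hn⟩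
    omega
  -- the weight function
  set Q : V → ℝ := fun v => (1 : ℝ) / ((G.degree r : ℝ) *
      ∏ w ∈ (P v).support.toFinset \ {r, v}, ((G.degree w : ℝ) - 1)) with hQ
  have hvnot : ∀ v, v ≠ r → v ∉ (P (par v)).support := by
    intro v hv hmem
    have h1 := hP v
    rw [hcat v hv, SimpleGraph.Walk.isPath_def, SimpleGraph.Walk.support_concat] at h1
    rw [List.nodup_append] at h1
    exact h1.2.2 v hmem v (by simp) rfl
  have hsuppv : ∀ v, v ≠ r →
      (P v).support.toFinset = insert v (P (par v)).support.toFinset := by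
    intro v hv
    have h1 : (P v).support = (P (par v)).support ++ [v] := by
      rw [hcat v hv, SimpleGraph.Walk.support_concat]
    rw [h1, List.toFinset_append]
    ext x
    simp [or_comm]
  -- recursion for Q
  have hQrec1 : ∀ v, v ≠ r → par v = r → Q v = 1 / (G.degree r : ℝ) := by
    intro v hv hpr
    have h1 := hsuppv v hv
    rw [hpr, hPr] at h1
    have h2 : (P v).support.toFinset \ {r, v} = ∅ := by
      rw [h1]
      ext x
      simp only [SimpleGraph.Walk.support_nil, List.toFinset_cons, List.toFinset_nil,
        LawfulSingleton.insert_empty_eq, Finset.mem_sdiff, Finset.mem_insert, Finset.mem_singleton,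
        Finset.notMem_empty, iff_false]
      tauto
    simp [hQ, h2]
  have hQrec2 : ∀ v, v ≠ r → par v ≠ r →
      Q v = Q (par v) / ((G.degree (par v) : ℝ) - 1) := by
    intro v hv hpr
    have h1 := hsuppv v hv
    have hvn := hvnot v hv
    have hpv : par v ≠ v := by
      intro e
      have ha := hadj v hv
      rw [e] at ha
      exact G.loopless.irrefl v ha
    have h2 : (P v).support.toFinset \ {r, v} =
        insert (par v) ((P (par v)).support.toFinset \ {r, par v}) := by
      rw [h1]
      ext x
      simp only [Finset.mem_sdiff, Finset.mem_insert, Finset.mem_singleton,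
        List.mem_toFinset, not_or]
      constructor
      · rintro ⟨hx | hx, hxr, hxv⟩
        · exact absurd hx hxv
        · by_cases hxp : x = par v
          · exact Or.inl hxp
          · exact Or.inr ⟨hx, hxr, hxp⟩
      · rintro (hxp | ⟨hx, hxr, hxp⟩)
        · subst hxp
          exact ⟨Or.inr (P (par v)).end_mem_support, hpr, hpv⟩
        · exact ⟨Or.inr hx, hxr, fun e => hvn (e ▸ hx)⟩
    have h3 : par v ∉ (P (par v)).support.toFinset \ {r, par v} := by simp
    simp only [hQ]
    rw [h2, Finset.prod_insert h3, div_div]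
    ring
  -- evaluate the fiber sums
  have hinner : ∀ u : V, ∑ v ∈ C u, Q v =
      if u = r then 1 else if G.degree u = 1 then 0 else Q u := by
    intro u
    by_cases hu : u = r
    · subst hu
      rw [if_pos rfl]
      have : ∀ v ∈ C u, Q v = 1 / (G.degree u : ℝ) := by
        intro v hv
        simp only [hCdef, Finset.mem_filter] at hv
        exact hQrec1 v hv.2.1 hv.2.2
      rw [Finset.sum_congr rfl this, Finset.sum_const, hcardCr, nsmul_eq_mul]
      have hne : (G.degree u : ℝ) ≠ 0 := by
        have := hdegr
        exact_mod_cast (by omega : G.degree u ≠ 0)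
      field_simp
    · rw [if_neg hu]
      have hq : ∀ v ∈ C u, Q v = Q u / ((G.degree u : ℝ) - 1) := by
        intro v hv
        simp only [hCdef, Finset.mem_filter] at hv
        have := hQrec2 v hv.2.1 (by rw [hv.2.2]; exact hu)
        rwa [hv.2.2] at this
      rw [Finset.sum_congr rfl hq, Finset.sum_const, hcardCu u hu, nsmul_eq_mul]
      by_cases hd : G.degree u = 1
      · rw [if_pos hd, hd]
        simp
      · rw [if_neg hd]
        have hge : 2 ≤ G.degree u := by have := hdeg1 u hu; omega
        have hcast : ((G.degree u - 1 : ℕ) : ℝ) = (G.degree u : ℝ) - 1 := by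
          have : 1 ≤ G.degree u := by omega
          push_cast [Nat.cast_sub this]
          ring
        rw [hcast, mul_div_cancel₀]
        intro hzero
        have : (G.degree u : ℝ) = 1 := by linarith
        exact hd (by exact_mod_cast this)
  -- the fiberwise sum
  set A : Finset V := Finset.univ.filter (fun v => v ≠ r) with hA
  have hfib : ∑ u : V, ∑ v ∈ A.filter (fun v => par v = u), Q v = ∑ v ∈ A, Q v :=
    Finset.sum_fiberwise_of_maps_to (fun x _ => Finset.mem_univ (par x)) Q
  have hAC : ∀ u, A.filter (fun v => par v = u) = C u := by
    intro u
    rw [hA, hCdef, Finset.filter_filter]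
  rw [Finset.sum_congr rfl (fun u _ => by rw [hAC u, hinner u])] at hfib
  -- compute the left side of hfib
  have hsplit : ∑ u : V, (if u = r then (1:ℝ) else if G.degree u = 1 then 0 else Q u)
      = 1 + ∑ u ∈ A.filter (fun u => ¬ G.degree u = 1), Q u := by
    rw [← Finset.sum_filter_add_sum_filter_not Finset.univ (fun u => u = r)]
    have h1 : Finset.univ.filter (fun u : V => u = r) = {r} := by
      ext x; simp
    have h2 : Finset.univ.filter (fun u : V => ¬ u = r) = A := by
      rw [hA]
    rw [h1, h2, Finset.sum_singleton, if_pos rfl]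
    congr 1
    have hsf : ∑ u ∈ A.filter (fun u => ¬ G.degree u = 1), Q u
        = ∑ u ∈ A, (if ¬ G.degree u = 1 then Q u else 0) := Finset.sum_filter _ _
    rw [hsf]
    apply Finset.sum_congr rfl
    intro u hu
    have hur : u ≠ r := by
      rw [hA] at hu
      exact (Finset.mem_filter.mp hu).2
    rw [if_neg hur]
    by_cases hd : G.degree u = 1 <;> simp [hd]
  rw [hsplit] at hfib
  have hAsplit : ∑ v ∈ A, Q v =
      ∑ v ∈ A.filter (fun v => G.degree v = 1), Q v
      + ∑ v ∈ A.filter (fun v => ¬ G.degree v = 1), Q v :=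
    (Finset.sum_filter_add_sum_filter_not A (fun v => G.degree v = 1) Q).symm
  rw [hAsplit] at hfib
  have hfinal : ∑ v ∈ A.filter (fun v => G.degree v = 1), Q v = 1 := by linarith
  have hset : Finset.univ.filter (fun v : V => v ≠ r ∧ G.degree v = 1)
      = A.filter (fun v => G.degree v = 1) := by
    rw [hA, Finset.filter_filter]
  calc ∑ v ∈ Finset.univ.filter (fun v : V => v ≠ r ∧ G.degree v = 1),
      (1 : ℝ) / ((G.degree r : ℝ) *
        ∏ w ∈ (P v).support.toFinset \ {r, v}, ((G.degree w : ℝ) - 1))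
      = ∑ v ∈ A.filter (fun v => G.degree v = 1), Q v := by rw [hset]
    _ = 1 := hfinal
end

section
/- Let g : ℝ → ℝ be convex on [0,1], monotone nondecreasing on [0,1], with g(0) = 0 and g(1) = 1, and suppose g is differentiable at a point s₁ ∈ (0,1) with derivative c. Then for every natural number n and every s ∈ [s₁, 1], the n-fold iterate g^{[n]}(s) satisfies g^{[n]}(s) ≤ max(1 − cⁿ·(1 − s), g(s₁)). -/
/-- Region I iteration bound from the proof of Lemma 3: for a probability
generating function `g` (convex and monotone on `[0,1]`, `g(0)=0`, `g(1)=1`)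
differentiable at `s₁ ∈ (0,1)` with derivative `c`, the iterates starting at
`s ∈ [s₁,1]` satisfy `g^{[n]}(s) ≤ max(1 − cⁿ(1 − s), g(s₁))`. -/
theorem stmt_13 (g : ℝ → ℝ) (c : ℝ) (s₁ : ℝ)
    (hconv : ConvexOn ℝ (Set.Icc 0 1) g)
    (hmono : MonotoneOn g (Set.Icc 0 1))
    (h0 : g 0 = 0) (h1 : g 1 = 1)
    (hs₁ : s₁ ∈ Set.Ioo (0 : ℝ) 1)
    (hderiv : HasDerivAt g c s₁) :
    ∀ (n : ℕ) (s : ℝ), s ∈ Set.Icc s₁ 1 →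
      g^[n] s ≤ max (1 - c ^ n * (1 - s)) (g s₁) := by
  obtain ⟨hs₁0, hs₁1⟩ := hs₁
  have h0mem : (0 : ℝ) ∈ Set.Icc (0:ℝ) 1 := by constructor <;> norm_num
  have h1mem : (1 : ℝ) ∈ Set.Icc (0:ℝ) 1 := by constructor <;> norm_num
  have hs₁mem : s₁ ∈ Set.Icc (0:ℝ) 1 := ⟨hs₁0.le, hs₁1.le⟩
  -- g maps [0,1] into [0,1]
  have hmaps : Set.MapsTo g (Set.Icc 0 1) (Set.Icc 0 1) := by
    intro x hx
    constructor
    · have := hmono h0mem hx hx.1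
      rwa [h0] at this
    · have := hmono hx h1mem hx.2
      rwa [h1] at this
  -- g x ≤ x on [0,1] by convexity
  have hle : ∀ x ∈ Set.Icc (0:ℝ) 1, g x ≤ x := by
    intro x hx
    have key : g ((1 - x) • (0:ℝ) + x • (1:ℝ)) ≤ (1 - x) • g 0 + x • g 1 :=
      hconv.2 h0mem h1mem (by linarith [hx.2]) hx.1 (by ring)
    simp only [smul_eq_mul, mul_zero, mul_one, zero_add] at key
    rw [h0, h1] at key
    linarith
  -- derivative comparisons via slopes
  have htendne : Filter.Tendsto (slope g s₁) (nhdsWithin s₁ {s₁}ᶜ) (nhds c) :=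
    hasDerivAt_iff_tendsto_slope.mp hderiv
  have htendR : Filter.Tendsto (slope g s₁) (nhdsWithin s₁ (Set.Ioi s₁)) (nhds c) :=
    htendne.mono_left (nhdsWithin_mono _ (fun y hy => ne_of_gt hy))
  have htendL : Filter.Tendsto (slope g s₁) (nhdsWithin s₁ (Set.Iio s₁)) (nhds c) :=
    htendne.mono_left (nhdsWithin_mono _ (fun y hy => ne_of_lt hy))
  have hc0 : 0 ≤ c := by
    refine ge_of_tendsto htendL ?_
    filter_upwards [Ioo_mem_nhdsLT_of_mem ⟨hs₁0, le_refl s₁⟩] with y hy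
    rw [slope_def_field]
    have e : (g y - g s₁) / (y - s₁) = (g s₁ - g y) / (s₁ - y) := by
      rw [← neg_sub (g s₁) (g y), ← neg_sub s₁ y, neg_div_neg_eq]
    rw [e]
    have := hmono ⟨hy.1.le, (hy.2.trans hs₁1).le⟩ hs₁mem hy.2.le
    exact div_nonneg (by linarith) (by linarith [hy.2])
  have cA : c ≤ (g 1 - g s₁) / (1 - s₁) := by
    refine le_of_tendsto htendR ?_
    filter_upwards [Ioo_mem_nhdsGT_of_mem ⟨le_refl s₁, hs₁1⟩] with y hy
    rw [slope_def_field]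
    exact hconv.secant_mono hs₁mem ⟨(hs₁0.trans hy.1).le, hy.2.le⟩ h1mem
      (ne_of_gt hy.1) (by linarith [hy.2] : (1:ℝ) ≠ s₁) hy.2.le
  -- chord bound: g t ≤ 1 - c (1 - t) on [s₁, 1]
  have hslope : ∀ t ∈ Set.Icc s₁ 1, g t ≤ 1 - c * (1 - t) := by
    intro t ht
    rcases eq_or_lt_of_le ht.2 with h | h
    · rw [h, h1]; ring_nf; rfl
    · have ht01 : t ∈ Set.Icc (0:ℝ) 1 := ⟨(hs₁0.le.trans ht.1), ht.2⟩
      have h2 : (g s₁ - g 1) / (s₁ - 1) ≤ (g t - g 1) / (t - 1) :=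
        hconv.secant_mono h1mem hs₁mem ht01 (ne_of_lt hs₁1) (ne_of_lt h) ht.1
      have e1 : (g 1 - g s₁) / (1 - s₁) = (g s₁ - g 1) / (s₁ - 1) := by
        rw [← neg_sub (g 1) (g s₁), ← neg_sub 1 s₁, neg_div_neg_eq]
      have e2 : (g t - g 1) / (t - 1) = (1 - g t) / (1 - t) := by
        rw [h1, ← neg_sub (g t) 1, ← neg_sub t 1, neg_div_neg_eq]
      have hc : c ≤ (1 - g t) / (1 - t) := by
        rw [← e2]; exact (cA.trans (e1 ▸ h2))
      have hpos : (0:ℝ) < 1 - t := by linarith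
      have := (le_div_iff₀ hpos).mp hc
      linarith
  intro n s hs
  have hs01 : s ∈ Set.Icc (0:ℝ) 1 := ⟨hs₁0.le.trans hs.1, hs.2⟩
  induction n with
  | zero =>
    simp only [Function.iterate_zero, id_eq, pow_zero, one_mul]
    have e : 1 - (1 - s) = s := by ring
    rw [e]
    exact le_max_left _ _
  | succ n ih =>
    rw [Function.iterate_succ_apply']
    set t := g^[n] s with htdef
    have ht01 : t ∈ Set.Icc (0:ℝ) 1 := hmaps.iterate n hs01
    by_cases hts : t ≤ s₁
    · exact le_max_of_le_right (hmono ht01 hs₁mem hts)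
    · push_neg at hts
      by_cases htg : t ≤ g s₁
      · exact le_max_of_le_right ((hle t ht01).trans htg)
      · push_neg at htg
        have htA : t ≤ 1 - c ^ n * (1 - s) := by
          rcases le_max_iff.mp ih with h | h
          · exact h
          · linarith
        have hgt := hslope t ⟨hts.le, ht01.2⟩
        have hmul : c * (c ^ n * (1 - s)) ≤ c * (1 - t) :=
          mul_le_mul_of_nonneg_left (by linarith) hc0
        have e : c ^ (n + 1) * (1 - s) = c * (c ^ n * (1 - s)) := by
          rw [pow_succ]; ring
        refine le_max_of_le_left ?_
        linarith [e ▸ hmul]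
end
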